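/- Let Ω be an open subset of ℝ² and let C be a compact subset of Ω. Then there is a constant K > 0 such that for all bounded doubly increasing functions u, w : Ω → ℝ, diam w(C) ≤ diam u(Ω) + K · ∫_Ω |w − u| dμ. -/

import Mathlib

open Set MeasureTheory

/-- Key square estimate: if the square with lower-left corner `a` and side `ε`
lies in `Ω`, and `f, g` are doubly increasing on `Ω`, then
`(f a - g (top corner)) * ε² ≤ ∫⁻ |f - g|`. -/
lemma stmt9_sq (Ω : Set (ℝ × ℝ)) (ε : ℝ) (hε : 0 < ε) (a : ℝ × ℝ)
    (hS : Icc a.1 (a.1 + ε) ×ˢ Icc a.2 (a.2 + ε) ⊆ Ω)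
    (f g : ℝ × ℝ → ℝ)
    (hf : ∀ p ∈ Ω, ∀ q ∈ Ω, p.1 ≤ q.1 → p.2 ≤ q.2 → f p ≤ f q)
    (hg : ∀ p ∈ Ω, ∀ q ∈ Ω, p.1 ≤ q.1 → p.2 ≤ q.2 → g p ≤ g q) :
    ENNReal.ofReal (f a - g (a.1 + ε, a.2 + ε)) * (ENNReal.ofReal ε * ENNReal.ofReal ε)
      ≤ ∫⁻ z in Ω, ENNReal.ofReal |f z - g z| := by
  set S := Icc a.1 (a.1 + ε) ×ˢ Icc a.2 (a.2 + ε) with hSdef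
  have haS : a ∈ S := ⟨⟨le_refl _, by linarith⟩, ⟨le_refl _, by linarith⟩⟩
  have hbS : ((a.1 + ε, a.2 + ε) : ℝ × ℝ) ∈ S := by
    constructor <;> constructor <;> simp <;> linarith
  have hmeas : MeasurableSet S := measurableSet_Icc.prod measurableSet_Icc
  have hμ : volume S = ENNReal.ofReal ε * ENNReal.ofReal ε := by
    rw [hSdef, Measure.volume_eq_prod, Measure.prod_prod, Real.volume_Icc, Real.volume_Icc]
    simp
  calc ENNReal.ofReal (f a - g (a.1 + ε, a.2 + ε)) * (ENNReal.ofReal ε * ENNReal.ofReal ε)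
      = ∫⁻ _ in S, ENNReal.ofReal (f a - g (a.1 + ε, a.2 + ε)) := by
        rw [setLIntegral_const, hμ]
    _ ≤ ∫⁻ z in S, ENNReal.ofReal |f z - g z| := by
        refine setLIntegral_mono' hmeas fun z hz => ?_
        refine ENNReal.ofReal_le_ofReal ?_
        have hfz : f a ≤ f z := hf a (hS haS) z (hS hz) hz.1.1 hz.2.1
        have hgz : g z ≤ g (a.1 + ε, a.2 + ε) := hg z (hS hz) _ (hS hbS) hz.1.2 hz.2.2
        have := abs_nonneg (f z - g z)
        have := le_abs_self (f z - g z)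
        linarith
    _ ≤ ∫⁻ z in Ω, ENNReal.ofReal |f z - g z| := lintegral_mono_set hS

/-- For an open `Ω ⊆ ℝ²` and a compact `C ⊆ Ω` there is a constant `K > 0` such that
`diam w(C) ≤ diam u(Ω) + K‖w - u‖_Ω` for all bounded doubly increasing `u, w`. -/
theorem stmt9 (Ω : Set (ℝ × ℝ)) (hΩ : IsOpen Ω) (C : Set (ℝ × ℝ))
    (hC : IsCompact C) (hCΩ : C ⊆ Ω) :
    ∃ K : ℝ, 0 < K ∧ ∀ u w : ℝ × ℝ → ℝ,
      (∀ p ∈ Ω, ∀ q ∈ Ω, p.1 ≤ q.1 → p.2 ≤ q.2 → u p ≤ u q) →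
      (∀ p ∈ Ω, ∀ q ∈ Ω, p.1 ≤ q.1 → p.2 ≤ q.2 → w p ≤ w q) →
      Bornology.IsBounded (u '' Ω) → Bornology.IsBounded (w '' Ω) →
      ENNReal.ofReal (Metric.diam (w '' C)) ≤
        ENNReal.ofReal (Metric.diam (u '' Ω)) +
          ENNReal.ofReal K * ∫⁻ p in Ω, ENNReal.ofReal |w p - u p| := by
  obtain ⟨δ, hδ, hthick⟩ := hC.exists_thickening_subset_open hΩ hCΩ
  set ε := δ / 2 with hεdef
  have hε : 0 < ε := by positivity
  refine ⟨2 / ε ^ 2, by positivity, ?_⟩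
  intro u w hu hw hub hwb
  set L := ∫⁻ p in Ω, ENNReal.ofReal |w p - u p| with hLdef
  set e := ENNReal.ofReal ε with hedef
  have he0 : e ≠ 0 := by
    simp only [hedef, ne_eq, ENNReal.ofReal_eq_zero, not_le]; exact hε
  have heT : e ≠ ⊤ := ENNReal.ofReal_ne_top
  have hee0 : e * e ≠ 0 := mul_ne_zero he0 he0
  have heeT : e * e ≠ ⊤ := ENNReal.mul_ne_top heT heT
  -- points within sup-distance ε of C lie in Ω
  have hsub : ∀ c ∈ C, ∀ z : ℝ × ℝ, |z.1 - c.1| ≤ ε → |z.2 - c.2| ≤ ε → z ∈ Ω := by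
    intro c hc z h1 h2
    refine hthick (Metric.mem_thickening_iff.2 ⟨c, hc, ?_⟩)
    have : dist z c = max (dist z.1 c.1) (dist z.2 c.2) := Prod.dist_eq
    rw [this]
    have : max (dist z.1 c.1) (dist z.2 c.2) ≤ ε := by
      rw [Real.dist_eq, Real.dist_eq]; exact max_le h1 h2
    linarith [hεdef ▸ this]
  -- main pairwise estimate
  have hmain : ∀ p ∈ C, ∀ q ∈ C, ENNReal.ofReal (w q - w p) ≤
      ENNReal.ofReal (Metric.diam (u '' Ω)) + ENNReal.ofReal (2 / ε ^ 2) * L := by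
    intro p hp q hq
    -- upper square at q
    have hSq : Icc q.1 (q.1 + ε) ×ˢ Icc q.2 (q.2 + ε) ⊆ Ω := by
      rintro z ⟨⟨h1, h2⟩, h3, h4⟩
      exact hsub q hq z (abs_le.2 ⟨by linarith, by linarith⟩)
        (abs_le.2 ⟨by linarith, by linarith⟩)
    -- lower square at p, with lower-left corner pb
    set pb : ℝ × ℝ := (p.1 - ε, p.2 - ε) with hpbdef
    have hSp : Icc pb.1 (pb.1 + ε) ×ˢ Icc pb.2 (pb.2 + ε) ⊆ Ω := by
      rintro z ⟨⟨h1, h2⟩, h3, h4⟩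
      simp only [hpbdef] at h1 h2 h3 h4
      exact hsub p hp z (abs_le.2 ⟨by linarith, by linarith⟩)
        (abs_le.2 ⟨by linarith, by linarith⟩)
    have hA : ENNReal.ofReal (w q - u (q.1 + ε, q.2 + ε)) * (e * e) ≤ L := by
      have := stmt9_sq Ω ε hε q hSq w u hw hu
      rw [hLdef]
      exact this
    have hB : ENNReal.ofReal (u pb - w (pb.1 + ε, pb.2 + ε)) * (e * e) ≤ L := by
      have h := stmt9_sq Ω ε hε pb hSp u w hu hw
      refine h.trans (le_of_eq ?_)
      rw [hLdef]
      congr 1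
      ext z
      rw [abs_sub_comm]
    have hpb' : ((pb.1 + ε, pb.2 + ε) : ℝ × ℝ) = p := by
      simp [hpbdef]
    rw [hpb'] at hB
    -- corner points lie in Ω
    have hqtΩ : ((q.1 + ε, q.2 + ε) : ℝ × ℝ) ∈ Ω := by
      refine hSq ?_
      constructor <;> constructor <;> simp <;> linarith
    have hpbΩ : pb ∈ Ω := by
      refine hSp ?_
      constructor <;> constructor <;> simp [hpbdef] <;> linarith
    -- middle term
    have hmid : u (q.1 + ε, q.2 + ε) - u pb ≤ Metric.diam (u '' Ω) := by
      have := Metric.dist_le_diam_of_mem hub (mem_image_of_mem u hqtΩ)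
        (mem_image_of_mem u hpbΩ)
      rw [Real.dist_eq] at this
      exact (le_abs_self _).trans this
    have hA' : ENNReal.ofReal (w q - u (q.1 + ε, q.2 + ε)) ≤ L / (e * e) :=
      (ENNReal.le_div_iff_mul_le (Or.inl hee0) (Or.inl heeT)).2 hA
    have hB' : ENNReal.ofReal (u pb - w p) ≤ L / (e * e) :=
      (ENNReal.le_div_iff_mul_le (Or.inl hee0) (Or.inl heeT)).2 hB
    have hsplit : ENNReal.ofReal (w q - w p) ≤
        ENNReal.ofReal (w q - u (q.1 + ε, q.2 + ε)) +
        (ENNReal.ofReal (u (q.1 + ε, q.2 + ε) - u pb) + ENNReal.ofReal (u pb - w p)) := by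
      have h1 : w q - w p = (w q - u (q.1 + ε, q.2 + ε)) +
          ((u (q.1 + ε, q.2 + ε) - u pb) + (u pb - w p)) := by ring
      rw [h1]
      exact (ENNReal.ofReal_add_le).trans
        (add_le_add_right ENNReal.ofReal_add_le _)
    have hK : ENNReal.ofReal (2 / ε ^ 2) * L = L / (e * e) + L / (e * e) := by
      have h2 : ENNReal.ofReal (2 / ε ^ 2) = 2 / (e * e) := by
        rw [ENNReal.ofReal_div_of_pos (by positivity), hedef]
        congr 1
        · exact ENNReal.ofReal_ofNat 2
        · rw [sq, ENNReal.ofReal_mul hε.le]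
      rw [h2, ENNReal.div_eq_inv_mul, ENNReal.div_eq_inv_mul]
      ring
    calc ENNReal.ofReal (w q - w p) ≤ _ := hsplit
      _ ≤ L / (e * e) + (ENNReal.ofReal (Metric.diam (u '' Ω)) + L / (e * e)) :=
          add_le_add hA' (add_le_add (ENNReal.ofReal_le_ofReal hmid) hB')
      _ = ENNReal.ofReal (Metric.diam (u '' Ω)) + (L / (e * e) + L / (e * e)) := by ring
      _ = _ := by rw [hK]
  -- conclude via the emetric diameter
  refine le_trans (ENNReal.ofReal_toReal_le) ?_
  refine EMetric.diam_le ?_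
  rintro x ⟨p, hp, rfl⟩ y ⟨q, hq, rfl⟩
  rw [edist_dist, Real.dist_eq]
  rcases le_total (w p) (w q) with h | h
  · rw [abs_of_nonpos (by linarith), neg_sub]
    exact hmain p hp q hq
  · rw [abs_of_nonneg (by linarith)]
    exact hmain q hq p hp
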